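/- Let T be a completely positive operator whose Kraus operators A_1,...,A_m are n × n integer matrices with entries of absolute value at most M, and suppose T(I) and T*(I) are both nonsingular. Then (M²n²m)·I ⪰ T(I) ⪰ (M²n²m)^{-(n-1)}·I, and the same bounds hold for T*(I). -/

import Mathlib

open Matrix
open scoped ComplexOrder


lemma aux_conj {n : ℕ} {P : Matrix (Fin n) (Fin n) ℂ} (hP : P.IsHermitian) (a : ℝ) :
    a • (1 : Matrix (Fin n) (Fin n) ℂ) - P =
      (hP.eigenvectorUnitary : Matrix (Fin n) (Fin n) ℂ) *
        diagonal (fun j => ((a - hP.eigenvalues j : ℝ) : ℂ)) *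
        (star (hP.eigenvectorUnitary : Matrix (Fin n) (Fin n) ℂ)) := by
  have hU : (hP.eigenvectorUnitary : Matrix (Fin n) (Fin n) ℂ) *
      star (hP.eigenvectorUnitary : Matrix (Fin n) (Fin n) ℂ) = 1 :=
    Matrix.mem_unitaryGroup_iff.mp hP.eigenvectorUnitary.2
  have hdiag : diagonal (fun j => ((a - hP.eigenvalues j : ℝ) : ℂ)) =
      (a : ℂ) • (1 : Matrix (Fin n) (Fin n) ℂ) -
        diagonal (RCLike.ofReal ∘ hP.eigenvalues) := by
    ext i j
    rcases eq_or_ne i j with rfl | hij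
    · simp [Matrix.diagonal_apply_eq, Matrix.smul_apply]
    · simp [Matrix.diagonal_apply_ne _ hij, Matrix.one_apply_ne hij, Matrix.smul_apply]
  rw [hdiag, Matrix.mul_sub, Matrix.sub_mul, Matrix.mul_smul, Matrix.smul_mul, Matrix.mul_one, hU,
    ← Unitary.conjStarAlgAut_apply (S := ℂ), ← hP.spectral_theorem]
  ext i j
  simp [Matrix.smul_apply]

lemma aux_conj' {n : ℕ} {P : Matrix (Fin n) (Fin n) ℂ} (hP : P.IsHermitian) (a : ℝ) :
    P - a • (1 : Matrix (Fin n) (Fin n) ℂ) =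
      (hP.eigenvectorUnitary : Matrix (Fin n) (Fin n) ℂ) *
        diagonal (fun j => ((hP.eigenvalues j - a : ℝ) : ℂ)) *
        (star (hP.eigenvectorUnitary : Matrix (Fin n) (Fin n) ℂ)) := by
  have h := aux_conj hP a
  have : (hP.eigenvectorUnitary : Matrix (Fin n) (Fin n) ℂ) *
        diagonal (fun j => ((hP.eigenvalues j - a : ℝ) : ℂ)) *
        (star (hP.eigenvectorUnitary : Matrix (Fin n) (Fin n) ℂ)) =
      -((hP.eigenvectorUnitary : Matrix (Fin n) (Fin n) ℂ) *
        diagonal (fun j => ((a - hP.eigenvalues j : ℝ) : ℂ)) *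
        (star (hP.eigenvectorUnitary : Matrix (Fin n) (Fin n) ℂ))) := by
    have hd : (diagonal fun j => ((hP.eigenvalues j - a : ℝ) : ℂ)) =
        -diagonal (fun j => ((a - hP.eigenvalues j : ℝ) : ℂ)) := by
      ext i j
      by_cases hij : i = j <;> simp [Matrix.diagonal_apply, hij] <;> push_cast <;> ring
    rw [hd, Matrix.mul_neg, Matrix.neg_mul]
  rw [this, ← h]
  abel

lemma aux_upper {n : ℕ} {P : Matrix (Fin n) (Fin n) ℂ} (hP : P.IsHermitian) {a : ℝ}
    (h : ∀ j, hP.eigenvalues j ≤ a) :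
    (a • (1 : Matrix (Fin n) (Fin n) ℂ) - P).PosSemidef := by
  rw [aux_conj hP a, Matrix.star_eq_conjTranspose]
  refine (Matrix.posSemidef_diagonal_iff.mpr fun j => ?_).mul_mul_conjTranspose_same _
  exact Complex.zero_le_real.mpr (sub_nonneg.mpr (h j))

lemma aux_lower {n : ℕ} {P : Matrix (Fin n) (Fin n) ℂ} (hP : P.IsHermitian) {a : ℝ}
    (h : ∀ j, a ≤ hP.eigenvalues j) :
    (P - a • (1 : Matrix (Fin n) (Fin n) ℂ)).PosSemidef := by
  rw [aux_conj' hP a, Matrix.star_eq_conjTranspose]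
  refine (Matrix.posSemidef_diagonal_iff.mpr fun j => ?_).mul_mul_conjTranspose_same _
  exact Complex.zero_le_real.mpr (sub_nonneg.mpr (h j))


lemma key_bounds (n m M : ℕ) (A : Fin m → Matrix (Fin n) (Fin n) ℤ)
    (hbd : ∀ i k l, |A i k l| ≤ (M : ℤ))
    (h1 : (∑ i, (A i).map (Int.cast : ℤ → ℂ) * ((A i).map (Int.cast : ℤ → ℂ))ᴴ).det ≠ 0)
    (hP : (∑ i, (A i).map (Int.cast : ℤ → ℂ) * ((A i).map (Int.cast : ℤ → ℂ))ᴴ).PosSemidef) :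
    (∀ j, hP.1.eigenvalues j ≤ (M : ℝ) ^ 2 * n ^ 2 * m) ∧
    (∀ j, ((((M : ℝ) ^ 2 * n ^ 2 * m) ^ (n - 1))⁻¹ ≤ hP.1.eigenvalues j)) := by
  classical
  set c : ℝ := (M : ℝ) ^ 2 * n ^ 2 * m with hc
  set P := ∑ i, (A i).map (Int.cast : ℤ → ℂ) * ((A i).map (Int.cast : ℤ → ℂ))ᴴ with hPdef
  have hev : P.IsHermitian := hP.1
  set μ : Fin n → ℝ := hev.eigenvalues with hμdef
  set Q : Matrix (Fin n) (Fin n) ℤ := ∑ i, A i * (A i)ᵀ with hQ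
  have hPQ : P = Q.map (Int.cast : ℤ → ℂ) := by
    ext k l
    simp only [hPdef, hQ, Matrix.sum_apply, Matrix.map_apply, Matrix.mul_apply,
      Matrix.conjTranspose_apply, Matrix.transpose_apply, star_intCast]
    push_cast
    rfl
  -- trace identity
  have hU : star (hev.eigenvectorUnitary : Matrix (Fin n) (Fin n) ℂ) *
      (hev.eigenvectorUnitary : Matrix (Fin n) (Fin n) ℂ) = 1 :=
    Matrix.mem_unitaryGroup_iff'.mp hev.eigenvectorUnitary.2
  have htrace : P.trace = ∑ j, (μ j : ℂ) := by
    conv_lhs => rw [hev.spectral_theorem, Unitary.conjStarAlgAut_apply]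
    rw [Matrix.trace_mul_cycle, hU, Matrix.one_mul, Matrix.trace_diagonal]
    rfl
  -- trace bound
  have htrQ : Q.trace ≤ ((M : ℤ) ^ 2 * n ^ 2 * m) := by
    rw [hQ, Matrix.trace_sum]
    have hterm : ∀ i, (A i * (A i)ᵀ).trace ≤ (M : ℤ) ^ 2 * n ^ 2 := by
      intro i
      rw [Matrix.trace]
      have hd : ∀ k : Fin n, (A i * (A i)ᵀ).diag k ≤ (M : ℤ) ^ 2 * n := by
        intro k
        rw [Matrix.diag_apply, Matrix.mul_apply]
        calc ∑ l, A i k l * (A i)ᵀ l k ≤ ∑ _l : Fin n, (M : ℤ) ^ 2 := by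
              refine Finset.sum_le_sum fun l _ => ?_
              rw [Matrix.transpose_apply, ← sq]
              calc (A i k l) ^ 2 = |A i k l| ^ 2 := (sq_abs _).symm
                _ ≤ (M : ℤ) ^ 2 := pow_le_pow_left₀ (abs_nonneg _) (hbd i k l) 2
          _ = (M : ℤ) ^ 2 * n := by simp [mul_comm]
      calc ∑ k, (A i * (A i)ᵀ).diag k ≤ ∑ _k : Fin n, (M : ℤ) ^ 2 * n :=
            Finset.sum_le_sum fun k _ => hd k
        _ = (M : ℤ) ^ 2 * n ^ 2 := by
            simp [Finset.sum_const, Finset.card_univ, nsmul_eq_mul]; ring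
    calc ∑ i, (A i * (A i)ᵀ).trace ≤ ∑ _i : Fin m, (M : ℤ) ^ 2 * n ^ 2 :=
          Finset.sum_le_sum fun i _ => hterm i
      _ = (M : ℤ) ^ 2 * n ^ 2 * m := by
          simp [Finset.sum_const, Finset.card_univ, nsmul_eq_mul]; ring
  have htrPQ : P.trace = ((Q.trace : ℤ) : ℂ) := by
    rw [hPQ, Matrix.trace, Matrix.trace]
    push_cast
    simp [Matrix.diag_apply, Matrix.map_apply]
  have hsum : ∑ j, μ j = ((Q.trace : ℤ) : ℝ) := by
    have h' : ((∑ j, μ j : ℝ) : ℂ) = (((Q.trace : ℤ) : ℝ) : ℂ) := by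
      push_cast
      rw [← htrace, htrPQ]
    exact_mod_cast h'
  have hμ0 : ∀ j, 0 ≤ μ j := hP.eigenvalues_nonneg
  have hub : ∀ j, μ j ≤ c := by
    intro j
    calc μ j ≤ ∑ k, μ k := Finset.single_le_sum (fun k _ => hμ0 k) (Finset.mem_univ j)
      _ ≤ c := by rw [hsum, hc]; exact_mod_cast htrQ
  refine ⟨hub, ?_⟩
  -- determinant
  have hdetPQ : P.det = ((Q.det : ℤ) : ℂ) := by
    rw [hPQ]; exact ((Int.castRingHom ℂ).map_det Q).symm
  have hprodC : ((Q.det : ℤ) : ℂ) = ∏ j, (μ j : ℂ) :=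
    hdetPQ.symm.trans hev.det_eq_prod_eigenvalues
  have hprodR : ((Q.det : ℤ) : ℝ) = ∏ j, μ j := by
    have h' : (((Q.det : ℤ) : ℝ) : ℂ) = ((∏ j, μ j : ℝ) : ℂ) := by
      rw [Complex.ofReal_intCast, hprodC, Complex.ofReal_prod]
    exact_mod_cast h'
  have hprod_pos : (0:ℝ) < ∏ j, μ j := by
    rcases (Finset.prod_nonneg fun j _ => hμ0 j).lt_or_eq with h | h
    · exact h
    · exact absurd (hdetPQ.trans (by rw [hprodC, ← Complex.ofReal_prod, ← h]; simp)) h1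
  have hdet1 : (1:ℝ) ≤ ∏ j, μ j := by
    rw [← hprodR] at hprod_pos ⊢
    have : (0:ℤ) < Q.det := by exact_mod_cast hprod_pos
    exact_mod_cast this
  intro j
  have hμjpos : 0 < μ j := by
    rcases (hμ0 j).lt_or_eq with h | h
    · exact h
    · exfalso
      have : ∏ k, μ k = 0 := Finset.prod_eq_zero (Finset.mem_univ j) h.symm
      linarith
  have hcpos : 0 < c := lt_of_lt_of_le hμjpos (hub j)
  have hrest : ∏ k ∈ Finset.univ.erase j, μ k ≤ c ^ (n - 1) := by
    calc ∏ k ∈ Finset.univ.erase j, μ k ≤ ∏ _k ∈ Finset.univ.erase j, c :=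
          Finset.prod_le_prod (fun k _ => hμ0 k) (fun k _ => hub k)
      _ = c ^ (n - 1) := by
          rw [Finset.prod_const, Finset.card_erase_of_mem (Finset.mem_univ j),
            Finset.card_univ, Fintype.card_fin]
  have hsplit : μ j * ∏ k ∈ Finset.univ.erase j, μ k = ∏ k, μ k :=
    Finset.mul_prod_erase Finset.univ μ (Finset.mem_univ j)
  have h1le : 1 ≤ μ j * c ^ (n - 1) := by
    calc (1:ℝ) ≤ ∏ k, μ k := hdet1
      _ = μ j * ∏ k ∈ Finset.univ.erase j, μ k := hsplit.symm
      _ ≤ μ j * c ^ (n - 1) := mul_le_mul_of_nonneg_left hrest (hμ0 j)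
  have hpow : 0 < c ^ (n - 1) := pow_pos hcpos _
  rw [inv_eq_one_div, div_le_iff₀ hpow]
  linarith

lemma sum_posSemidef {n m : ℕ} (A : Fin m → Matrix (Fin n) (Fin n) ℤ) :
    (∑ i, (A i).map (Int.cast : ℤ → ℂ) * ((A i).map (Int.cast : ℤ → ℂ))ᴴ).PosSemidef := by
  classical
  refine Finset.sum_induction _ _ (fun a b ha hb => ha.add hb) Matrix.PosSemidef.zero
    (fun i _ => Matrix.posSemidef_self_mul_conjTranspose _)

theorem operator_identity_loewner_bounds (n m M : ℕ)
    (A : Fin m → Matrix (Fin n) (Fin n) ℤ)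
    (hbd : ∀ i k l, |A i k l| ≤ (M : ℤ))
    (h1 : (∑ i, (A i).map (Int.cast : ℤ → ℂ) * ((A i).map (Int.cast : ℤ → ℂ))ᴴ).det ≠ 0)
    (h2 : (∑ i, ((A i).map (Int.cast : ℤ → ℂ))ᴴ * (A i).map (Int.cast : ℤ → ℂ)).det ≠ 0) :
    (((M : ℝ) ^ 2 * n ^ 2 * m) • (1 : Matrix (Fin n) (Fin n) ℂ) -
        ∑ i, (A i).map (Int.cast : ℤ → ℂ) * ((A i).map (Int.cast : ℤ → ℂ))ᴴ).PosSemidef ∧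
    ((∑ i, (A i).map (Int.cast : ℤ → ℂ) * ((A i).map (Int.cast : ℤ → ℂ))ᴴ) -
        ((((M : ℝ) ^ 2 * n ^ 2 * m) ^ (n - 1))⁻¹ • (1 : Matrix (Fin n) (Fin n) ℂ))).PosSemidef ∧
    (((M : ℝ) ^ 2 * n ^ 2 * m) • (1 : Matrix (Fin n) (Fin n) ℂ) -
        ∑ i, ((A i).map (Int.cast : ℤ → ℂ))ᴴ * (A i).map (Int.cast : ℤ → ℂ)).PosSemidef ∧
    ((∑ i, ((A i).map (Int.cast : ℤ → ℂ))ᴴ * (A i).map (Int.cast : ℤ → ℂ)) -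
        ((((M : ℝ) ^ 2 * n ^ 2 * m) ^ (n - 1))⁻¹ • (1 : Matrix (Fin n) (Fin n) ℂ))).PosSemidef := by
  have hswap : (∑ i, ((A i).map (Int.cast : ℤ → ℂ))ᴴ * (A i).map (Int.cast : ℤ → ℂ)) =
      ∑ i, ((A i)ᵀ).map (Int.cast : ℤ → ℂ) * (((A i)ᵀ).map (Int.cast : ℤ → ℂ))ᴴ := by
    refine Finset.sum_congr rfl fun i _ => ?_
    have ha : ((A i).map (Int.cast : ℤ → ℂ))ᴴ = ((A i)ᵀ).map (Int.cast : ℤ → ℂ) := by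
      ext k l; simp [Matrix.conjTranspose_apply]
    have hb : (((A i)ᵀ).map (Int.cast : ℤ → ℂ))ᴴ = (A i).map (Int.cast : ℤ → ℂ) := by
      rw [← ha, Matrix.conjTranspose_conjTranspose]
    rw [ha, hb]
  have hbd' : ∀ i k l, |(A i)ᵀ k l| ≤ (M : ℤ) := fun i k l => hbd i l k
  have hP1 := sum_posSemidef A
  have hP2 := sum_posSemidef (fun i => (A i)ᵀ)
  have hk1 := key_bounds n m M A hbd h1 hP1
  have hk2 := key_bounds n m M (fun i => (A i)ᵀ) hbd' (by rw [← hswap]; exact h2) hP2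
  refine ⟨aux_upper hP1.1 hk1.1, aux_lower hP1.1 hk1.2, ?_, ?_⟩
  · rw [hswap]; exact aux_upper hP2.1 hk2.1
  · rw [hswap]; exact aux_lower hP2.1 hk2.2
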